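/- Let G be a symmetric n×n integer matrix with even diagonal entries, Ḡ its lower-triangular half, and g an n×n integer matrix with g G gᵀ = G. Set M = Ḡ − g Ḡ gᵀ and let M̄ be the lower-triangular half of M (since M has zero diagonal, M̄ is the strictly lower-triangular part of M). Define ε(α, β) = (−1)^{α Ḡ βᵀ} and η(α) = (−1)^{α M̄ αᵀ} for row vectors α, β ∈ ℤⁿ. Then η(α)·η(β)·ε(α, β) = η(α + β)·ε(α g, β g) for all α, β ∈ ℤⁿ. -/

import Mathlib

private lemma negone_zpow_congr (a b : ℤ) (h : 2 ∣ a - b) :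
    (-1 : ℤˣ) ^ a = (-1 : ℤˣ) ^ b := by
  obtain ⟨k, hk⟩ := h
  have : a = b + 2 * k := by omega
  rw [this, zpow_add, zpow_mul,
    show ((-1 : ℤˣ)) ^ (2 : ℤ) = 1 by decide, one_zpow, mul_one]

private lemma btrans {n : ℕ} (A : Matrix (Fin n) (Fin n) ℤ) (x y : Fin n → ℤ) :
    dotProduct (Matrix.vecMul x A.transpose) y
      = dotProduct (Matrix.vecMul y A) x := by
  rw [Matrix.vecMul_transpose, dotProduct_comm, Matrix.dotProduct_mulVec]

private lemma bconj {n : ℕ} (A g : Matrix (Fin n) (Fin n) ℤ) (x y : Fin n → ℤ) :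
    dotProduct (Matrix.vecMul x (g * A * g.transpose)) y
      = dotProduct (Matrix.vecMul (Matrix.vecMul x g) A) (Matrix.vecMul y g) := by
  rw [show g * A * g.transpose = (g * A) * g.transpose from rfl,
    ← Matrix.vecMul_vecMul, ← Matrix.vecMul_vecMul, btrans, dotProduct_comm]

/-- Let `G` be a symmetric `n×n` integer matrix with even diagonal, `Ḡ` its
lower-triangular half, and `g` an integer matrix with `g G gᵀ = G`.  Set
`M = Ḡ − g Ḡ gᵀ` with lower-triangular half `M̄`.  With `ε(α,β) = (−1)^{α Ḡ βᵀ}` and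
`η(α) = (−1)^{α M̄ αᵀ}` one has `η(α)·η(β)·ε(α,β) = η(α+β)·ε(α g, β g)` for all
`α, β ∈ ℤⁿ`. -/
theorem eta_is_lift
    (n : ℕ) (G : Matrix (Fin n) (Fin n) ℤ)
    (hsymm : G.IsSymm) (heven : ∀ i, 2 ∣ G i i)
    (Gbar : Matrix (Fin n) (Fin n) ℤ)
    (hGbar : ∀ i j, Gbar i j = if j < i then G i j else if i = j then G i i / 2 else 0)
    (g : Matrix (Fin n) (Fin n) ℤ) (hg : g * G * g.transpose = G)
    (M : Matrix (Fin n) (Fin n) ℤ) (hM : M = Gbar - g * Gbar * g.transpose)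
    (Mbar : Matrix (Fin n) (Fin n) ℤ)
    (hMbar : ∀ i j, Mbar i j = if j < i then M i j else if i = j then M i i / 2 else 0)
    (ε : (Fin n → ℤ) → (Fin n → ℤ) → ℤˣ)
    (hε : ∀ α β, ε α β = (-1 : ℤˣ) ^ dotProduct (Matrix.vecMul α Gbar) β)
    (η : (Fin n → ℤ) → ℤˣ)
    (hη : ∀ α, η α = (-1 : ℤˣ) ^ dotProduct (Matrix.vecMul α Mbar) α) :
    ∀ α β : Fin n → ℤ,
      η α * η β * ε α β = η (α + β) * ε (Matrix.vecMul α g) (Matrix.vecMul β g) := by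
  -- Ḡ + Ḡᵀ = G
  have hGsum : Gbar + Gbar.transpose = G := by
    ext i j
    rcases lt_trichotomy j i with h | h | h
    · simp [Matrix.add_apply, Matrix.transpose_apply, hGbar, h, h.ne, not_lt.2 h.le]
    · subst h
      obtain ⟨k, hk⟩ := heven j
      simp [Matrix.add_apply, Matrix.transpose_apply, hGbar, hk]
      omega
    · have := hsymm.apply i j
      simp [Matrix.add_apply, Matrix.transpose_apply, hGbar, h, h.ne', not_lt.2 h.le]
      omega
  -- M is antisymmetric
  have hManti : M + M.transpose = 0 := by
    have hMt : M.transpose = Gbar.transpose - g * Gbar.transpose * g.transpose := by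
      rw [hM]
      simp [Matrix.transpose_sub, Matrix.transpose_mul, Matrix.mul_assoc]
    have : M + M.transpose
        = (Gbar + Gbar.transpose) - g * (Gbar + Gbar.transpose) * g.transpose := by
      rw [hMt, hM]
      noncomm_ring
    rw [this, hGsum, hg, sub_self]
  have hMdiag : ∀ i, M i i = 0 := by
    intro i
    have := congrFun (congrFun hManti i) i
    simp [Matrix.add_apply, Matrix.transpose_apply] at this
    omega
  have hMskew : ∀ i j, M j i = -M i j := by
    intro i j
    have := congrFun (congrFun hManti i) j
    simp [Matrix.add_apply, Matrix.transpose_apply] at this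
    omega
  -- entries of M - (Mbar + Mbarᵀ) are all even
  have hMNdvd : ∀ i j, 2 ∣ (M - (Mbar + Mbar.transpose)) i j := by
    intro i j
    rcases lt_trichotomy j i with h | h | h
    · simp [Matrix.sub_apply, Matrix.add_apply, Matrix.transpose_apply, hMbar, h,
        h.ne, not_lt.2 h.le]
    · subst h
      simp [Matrix.sub_apply, Matrix.add_apply, Matrix.transpose_apply, hMbar, hMdiag]
    · have := hMskew i j
      simp [Matrix.sub_apply, Matrix.add_apply, Matrix.transpose_apply, hMbar, h,
        h.ne', not_lt.2 h.le]
      omega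
  intro α β
  set N := Mbar + Mbar.transpose with hN
  -- evenness of the bilinear pairing against M - N
  have hdvd : 2 ∣ dotProduct (Matrix.vecMul α (M - N)) β := by
    unfold dotProduct Matrix.vecMul
    refine Finset.dvd_sum fun j _ => ?_
    refine Dvd.dvd.mul_right ?_ _
    exact Finset.dvd_sum fun i _ => Dvd.dvd.mul_left (hMNdvd i j) _
  -- abbreviations
  set a := dotProduct (Matrix.vecMul α Mbar) α with ha
  set b := dotProduct (Matrix.vecMul β Mbar) β with hb
  set c := dotProduct (Matrix.vecMul α Gbar) β with hc
  set d := dotProduct (Matrix.vecMul (α + β) Mbar) (α + β) with hd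
  set e := dotProduct (Matrix.vecMul (Matrix.vecMul α g) Gbar)
    (Matrix.vecMul β g) with he
  -- expansion of the quadratic form
  have h1 : d = a + b + dotProduct (Matrix.vecMul α N) β := by
    rw [hd, hN, Matrix.add_vecMul, add_dotProduct, dotProduct_add,
      dotProduct_add, Matrix.vecMul_add, add_dotProduct,
      btrans Mbar α β, ha, hb]
    ring
  -- rewriting the conjugated pairing
  have h2 : e = c - dotProduct (Matrix.vecMul α M) β := by
    rw [he, ← bconj Gbar g α β, hc]
    have : Matrix.vecMul α M = Matrix.vecMul α Gbar
        - Matrix.vecMul α (g * Gbar * g.transpose) := by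
      rw [hM, Matrix.vecMul_sub]
    rw [this, sub_dotProduct]
    ring
  have key : 2 ∣ (a + b + c) - (d + e) := by
    have hsub : dotProduct (Matrix.vecMul α (M - N)) β
        = dotProduct (Matrix.vecMul α M) β
          - dotProduct (Matrix.vecMul α N) β := by
      rw [Matrix.vecMul_sub, sub_dotProduct]
    have : (a + b + c) - (d + e) = dotProduct (Matrix.vecMul α (M - N)) β := by
      rw [hsub, h1, h2]; ring
    rw [this]; exact hdvd
  rw [hη, hη, hη, hε, hε, ← ha, ← hb, ← hc, ← hd, ← he, ← zpow_add, ← zpow_add, ← zpow_add]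
  exact negone_zpow_congr _ _ key
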